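/- Let E be a measurable space, S : E → E a measurable involution with S preserving a probability measure π, and let Q(x,·) = δ_{Φ(x)} be the deterministic proposal given by a measurable bijection Φ : E → E. Suppose Φ and S satisfy S∘Φ∘S = Φ⁻¹. Define the Markov kernel P by: from x, move to Φ(x) with probability α(x) = min(1, π∘Φ(x)·w(x)/π(x)) and otherwise move to S(x), where w is the Jacobian weight making π(dΦ(x))·w(x) the correct Radon–Nikodym factor; assume Φ preserves the reference measure (w ≡ 1) so α(x) = min(1, e^{U(x) - U(Φ(x))}) with π ∝ e^{-U}. Then P satisfies the skew detailed balance π(dx)P(x,dy) = π(dy)P(S(y),S(dx)), and hence leaves π invariant. -/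

import Mathlib

open MeasureTheory
open scoped ENNReal

private lemma key_real_hybrid (c u v : ℝ) :
    min 1 (Real.exp (u - v)) * (c * Real.exp (-u)) =
    min 1 (Real.exp (v - u)) * (c * Real.exp (-v)) := by
  have e1 : Real.exp (u - v) * Real.exp (-u) = Real.exp (-v) := by
    rw [← Real.exp_add]; congr 1; ring
  have e2 : Real.exp (v - u) * Real.exp (-v) = Real.exp (-u) := by
    rw [← Real.exp_add]; congr 1; ring
  rcases le_total u v with h | h
  · rw [min_eq_right (Real.exp_le_one_iff.mpr (by linarith)),
      min_eq_left (Real.one_le_exp (by linarith))]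
    linear_combination c * e1
  · rw [min_eq_left (Real.one_le_exp (by linarith)),
      min_eq_right (Real.exp_le_one_iff.mpr (by linarith))]
    linear_combination (-c) * e2

theorem hybrid_step_skew_detailed_balance_and_invariant
    {E : Type*} [MeasurableSpace E] (μ : Measure E) [SigmaFinite μ]
    (U : E → ℝ) (hUmeas : Measurable U)
    (c : ℝ) (hc : 0 < c)
    (π : Measure E) [IsProbabilityMeasure π]
    (hπ : π = μ.withDensity (fun x => ENNReal.ofReal (c * Real.exp (-U x))))
    (S : E → E) (hSmeas : Measurable S) (hSinv : ∀ x, S (S x) = x)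
    (hSπ : Measure.map S π = π) (hSμ : Measure.map S μ = μ)
    (hUS : ∀ x, U (S x) = U x)
    (Φ Ψ : E → E) (hΦmeas : Measurable Φ) (hΨmeas : Measurable Ψ)
    (hΦΨ : ∀ x, Ψ (Φ x) = x) (hΨΦ : ∀ x, Φ (Ψ x) = x)
    (hΦμ : Measure.map Φ μ = μ)
    (hrev : ∀ x, S (Φ (S x)) = Ψ x)
    (α : E → ℝ)
    (hα : ∀ x, α x = min 1 (Real.exp (U x - U (Φ x))))
    (P : E → Set E → ENNReal)
    (hP : ∀ x B, P x B =
      ENNReal.ofReal (α x) * B.indicator (fun _ => (1 : ENNReal)) (Φ x) +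
      (1 - ENNReal.ofReal (α x)) * B.indicator (fun _ => (1 : ENNReal)) (S x)) :
    (∀ A B : Set E, MeasurableSet A → MeasurableSet B →
      ∫⁻ x in A, P x B ∂π = ∫⁻ y in B, P (S y) (S ⁻¹' A) ∂π) ∧
    (∀ B : Set E, MeasurableSet B → ∫⁻ x, P x B ∂π = π B) := by
  classical
  set f : E → ℝ≥0∞ := fun x => ENNReal.ofReal (c * Real.exp (-U x)) with hfdef
  have hfm : Measurable f := (measurable_const.mul hUmeas.neg.exp).ennreal_ofReal
  set a : E → ℝ≥0∞ := fun x => ENNReal.ofReal (α x) with hadef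
  have hαeq : α = fun x => min 1 (Real.exp (U x - U (Φ x))) := funext hα
  have hαm : Measurable α := by
    rw [hαeq]
    exact measurable_const.min ((hUmeas.sub (hUmeas.comp hΦmeas)).exp)
  have ham : Measurable a := hαm.ennreal_ofReal
  have ha1 : ∀ x, a x ≤ 1 := by
    intro x
    simp only [hadef, hα]
    exact ENNReal.ofReal_le_one.mpr (min_le_left _ _)
  have hΦS : ∀ x, Φ (S x) = S (Ψ x) := by
    intro x
    calc Φ (S x) = S (S (Φ (S x))) := (hSinv _).symm
    _ = S (Ψ x) := by rw [hrev]
  have hΦSΦ : ∀ x, Φ (S (Φ x)) = S x := by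
    intro x; rw [hΦS, hΦΨ]
  -- key pointwise identity
  have key : ∀ x, a x * f x = a (S (Φ x)) * f (Φ x) := by
    intro x
    have hnn : ∀ u v : ℝ, 0 ≤ min 1 (Real.exp (u - v)) := fun u v =>
      le_min zero_le_one (Real.exp_nonneg _)
    simp only [hadef, hfdef, hα]
    rw [← ENNReal.ofReal_mul (hnn _ _), ← ENNReal.ofReal_mul (hnn _ _)]
    congr 1
    rw [hUS (Φ x), hΦSΦ x, hUS x]
    exact key_real_hybrid c (U x) (U (Φ x))
  -- change of variables lemmas
  have hSchange : ∀ g : E → ℝ≥0∞, Measurable g →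
      ∫⁻ x, g x ∂π = ∫⁻ x, g (S x) ∂π := by
    intro g hg
    conv_lhs => rw [← hSπ]
    exact lintegral_map hg hSmeas
  have hΦchange : ∀ g : E → ℝ≥0∞, Measurable g →
      ∫⁻ x, g x ∂μ = ∫⁻ x, g (Φ x) ∂μ := by
    intro g hg
    conv_lhs => rw [← hΦμ]
    exact lintegral_map hg hΦmeas
  have main : ∀ A B : Set E, MeasurableSet A → MeasurableSet B →
      ∫⁻ x in A, P x B ∂π = ∫⁻ y in B, P (S y) (S ⁻¹' A) ∂π := by
    intro A B hA hB
    set χA : E → ℝ≥0∞ := A.indicator (fun _ => 1) with hχA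
    set χB : E → ℝ≥0∞ := B.indicator (fun _ => 1) with hχB
    have hχAm : Measurable χA := measurable_const.indicator hA
    have hχBm : Measurable χB := measurable_const.indicator hB
    set g1 : E → ℝ≥0∞ := fun x => χA x * (a x * χB (Φ x)) with hg1
    set g2 : E → ℝ≥0∞ := fun x => χA x * ((1 - a x) * χB (S x)) with hg2
    set r1 : E → ℝ≥0∞ := fun y => χB y * (a (S y) * χA (Ψ y)) with hr1
    set r2 : E → ℝ≥0∞ := fun y => χB y * ((1 - a (S y)) * χA (S y)) with hr2
    have hg1m : Measurable g1 :=
      hχAm.mul (ham.mul (hχBm.comp hΦmeas))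
    have hg2m : Measurable g2 :=
      hχAm.mul (((measurable_const.sub ham).mul (hχBm.comp hSmeas)))
    have hr1m : Measurable r1 :=
      hχBm.mul ((ham.comp hSmeas).mul (hχAm.comp hΨmeas))
    have hr2m : Measurable r2 :=
      hχBm.mul ((measurable_const.sub (ham.comp hSmeas)).mul (hχAm.comp hSmeas))
    have hLHS : ∫⁻ x in A, P x B ∂π = (∫⁻ x, g1 x ∂π) + ∫⁻ x, g2 x ∂π := by
      rw [← lintegral_indicator hA, ← lintegral_add_left hg1m]
      refine lintegral_congr fun x => ?_
      by_cases hx : x ∈ A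
      · simp only [hg1, hg2, hχA, Set.indicator_of_mem hx, hP, hadef, one_mul, hχB]
      · simp [hg1, hg2, hχA, Set.indicator_of_notMem hx]
    have hpre : ∀ z, (S ⁻¹' A).indicator (fun _ => (1:ℝ≥0∞)) z = χA (S z) := by
      intro z
      by_cases hz : S z ∈ A
      · rw [Set.indicator_of_mem (Set.mem_preimage.mpr hz), hχA,
          Set.indicator_of_mem hz]
      · rw [Set.indicator_of_notMem (fun h => hz (Set.mem_preimage.mp h)), hχA,
          Set.indicator_of_notMem hz]
    have hRHS : ∫⁻ y in B, P (S y) (S ⁻¹' A) ∂π = (∫⁻ y, r1 y ∂π) + ∫⁻ y, r2 y ∂π := by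
      rw [← lintegral_indicator hB, ← lintegral_add_left hr1m]
      refine lintegral_congr fun y => ?_
      by_cases hy : y ∈ B
      · rw [Set.indicator_of_mem hy, hP, hpre, hpre, hΦS y]
        simp only [hSinv, hr1, hr2, hχB, Set.indicator_of_mem hy, hadef, one_mul]
      · simp [hr1, hr2, hχB, Set.indicator_of_notMem hy]
    have e2 : ∫⁻ x, g2 x ∂π = ∫⁻ y, r2 y ∂π := by
      rw [hSchange g2 hg2m]
      refine lintegral_congr fun y => ?_
      simp only [hg2, hr2, hSinv]
      ring
    have e1 : ∫⁻ x, g1 x ∂π = ∫⁻ y, r1 y ∂π := by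
      rw [hπ, lintegral_withDensity_eq_lintegral_mul _ hfm hg1m,
        lintegral_withDensity_eq_lintegral_mul _ hfm hr1m]
      have hhm : Measurable fun y => f (Ψ y) * (χA (Ψ y) * (a (Ψ y) * χB y)) :=
        (hfm.comp hΨmeas).mul ((hχAm.comp hΨmeas).mul ((ham.comp hΨmeas).mul hχBm))
      have step : ∫⁻ x, (f * g1) x ∂μ
          = ∫⁻ y, f (Ψ y) * (χA (Ψ y) * (a (Ψ y) * χB y)) ∂μ := by
        rw [hΦchange _ hhm]
        refine lintegral_congr fun x => ?_
        simp only [Pi.mul_apply, hg1, hΦΨ]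
      rw [step]
      refine lintegral_congr fun y => ?_
      have hk := key (Ψ y)
      rw [hΨΦ] at hk
      simp only [Pi.mul_apply, hr1]
      calc f (Ψ y) * (χA (Ψ y) * (a (Ψ y) * χB y))
          = (a (Ψ y) * f (Ψ y)) * (χA (Ψ y) * χB y) := by ring
        _ = (a (S y) * f y) * (χA (Ψ y) * χB y) := by rw [hk]
        _ = f y * (χB y * (a (S y) * χA (Ψ y))) := by ring
    rw [hLHS, hRHS, e1, e2]
  refine ⟨main, fun B hB => ?_⟩
  have := main Set.univ B MeasurableSet.univ hB
  rw [Measure.restrict_univ] at this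
  rw [this]
  have hPuniv : ∀ z, P z (S ⁻¹' Set.univ) = 1 := by
    intro z
    rw [hP]
    simp only [Set.preimage_univ, Set.indicator_univ, mul_one]
    exact add_tsub_cancel_of_le (ha1 z)
  calc ∫⁻ y in B, P (S y) (S ⁻¹' Set.univ) ∂π
      = ∫⁻ _ in B, 1 ∂π := by
        refine lintegral_congr fun y => hPuniv (S y)
    _ = π B := by simp
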